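/- Let G be a connected graph with no twins (i.e., no two distinct vertices u1, u2 satisfy N_G[u1] = N_G[u2] or N_G(u1) = N_G(u2)). Then for any graph H, dim_f(G[H]) = |V(G)| · l_f(H). -/

import Mathlib

open Finset

variable {α β V : Type*}

/-- The corona product `G ⊙ H`. -/
def SimpleGraph.corona (G : SimpleGraph α) (H : SimpleGraph β) :
    SimpleGraph (α ⊕ α × β) where
  Adj x y :=
    match x, y with
    | Sum.inl u1, Sum.inl u2 => G.Adj u1 u2
    | Sum.inl u1, Sum.inr p => u1 = p.1
    | Sum.inr p, Sum.inl u2 => p.1 = u2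
    | Sum.inr p, Sum.inr q => p.1 = q.1 ∧ H.Adj p.2 q.2
  symm := by
    constructor
    rintro (u1 | p) (u2 | q) h
    · exact h.symm
    · exact h.symm
    · exact h.symm
    · exact ⟨h.1.symm, h.2.symm⟩
  loopless := by
    constructor
    rintro (u | p) h
    · exact G.irrefl h
    · exact H.irrefl h.2

/-- The lexicographic product `G[H]`. -/
def SimpleGraph.lexProd (G : SimpleGraph α) (H : SimpleGraph β) :
    SimpleGraph (α × β) where
  Adj x y := G.Adj x.1 y.1 ∨ (x.1 = y.1 ∧ H.Adj x.2 y.2)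
  symm := by
    constructor
    rintro x y (h | ⟨h1, h2⟩)
    · exact Or.inl h.symm
    · exact Or.inr ⟨h1.symm, h2.symm⟩
  loopless := by
    constructor
    rintro x (h | ⟨h1, h2⟩)
    · exact G.irrefl h
    · exact H.irrefl h2

open scoped Classical in
/-- `R_F{x,y}`: the set of vertices resolving `x` and `y` (distance measured by `edist`,
which is `∞` between vertices in different components). -/
noncomputable def resolvingFinset (F : SimpleGraph V) [Fintype V] (x y : V) : Finset V :=
  univ.filter fun z => F.edist x z ≠ F.edist y z

/-- `S_H{v₁,v₂} = {v₁,v₂} ∪ (N_H(v₁) Δ N_H(v₂))`. -/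
def locatingFinset (H : SimpleGraph V) [Fintype V] [DecidableEq V]
    [DecidableRel H.Adj] (v1 v2 : V) : Finset V :=
  {v1, v2} ∪ symmDiff (H.neighborFinset v1) (H.neighborFinset v2)

/-- A resolving function of `F`. -/
def IsResolvingFn (F : SimpleGraph V) [Fintype V] (g : V → ℝ) : Prop :=
  (∀ v, g v ∈ Set.Icc (0 : ℝ) 1) ∧
    ∀ x y : V, x ≠ y → 1 ≤ ∑ z ∈ resolvingFinset F x y, g z

/-- The fractional metric dimension `dim_f(F)`. -/
noncomputable def fracMetricDim (F : SimpleGraph V) [Fintype V] : ℝ :=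
  sInf {w | ∃ g, IsResolvingFn F g ∧ w = ∑ v, g v}

/-- A locating function of `H`. -/
def IsLocatingFn (H : SimpleGraph V) [Fintype V] [DecidableEq V]
    [DecidableRel H.Adj] (g : V → ℝ) : Prop :=
  (∀ v, g v ∈ Set.Icc (0 : ℝ) 1) ∧
    ∀ v1 v2 : V, v1 ≠ v2 → 1 ≤ ∑ v ∈ locatingFinset H v1 v2, g v

/-- `l_f(H)`: the minimum weight of a locating function. -/
noncomputable def fracLoc (H : SimpleGraph V) [Fintype V] [DecidableEq V]
    [DecidableRel H.Adj] : ℝ :=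
  sInf {w | ∃ g, IsLocatingFn H g ∧ w = ∑ v, g v}

open scoped Classical in
/-- `λ(H)`: maximum number of common neighbours of two adjacent vertices, `-1` if no edges. -/
noncomputable def lambdaMax (H : SimpleGraph V) [Fintype V] : ℤ :=
  if hne : (univ.filter fun p : V × V => H.Adj p.1 p.2).Nonempty then
    (univ.filter fun p : V × V => H.Adj p.1 p.2).sup' hne fun p =>
      ((univ.filter fun w => H.Adj p.1 w ∧ H.Adj p.2 w).card : ℤ)
  else -1

open scoped Classical in
/-- `μ(H)`: maximum number of common neighbours of two distinct nonadjacent vertices,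
`0` for complete graphs. -/
noncomputable def muMax (H : SimpleGraph V) [Fintype V] : ℤ :=
  if hne : (univ.filter fun p : V × V => p.1 ≠ p.2 ∧ ¬H.Adj p.1 p.2).Nonempty then
    (univ.filter fun p : V × V => p.1 ≠ p.2 ∧ ¬H.Adj p.1 p.2).sup' hne fun p =>
      ((univ.filter fun w => H.Adj p.1 w ∧ H.Adj p.2 w).card : ℤ)
  else 0

/-- A graph is vertex-transitive if its automorphism group is transitive on vertices. -/
def IsVertexTransitive (H : SimpleGraph V) : Prop :=
  ∀ u v : V, ∃ φ : H ≃g H, φ u = v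

/-- Two distinct vertices are twins if they have the same closed or the same open
neighbourhood. -/
def SimpleGraph.Twins (G : SimpleGraph V) (u1 u2 : V) : Prop :=
  u1 ≠ u2 ∧ (insert u1 (G.neighborSet u1) = insert u2 (G.neighborSet u2) ∨
    G.neighborSet u1 = G.neighborSet u2)

open scoped Classical in
/-- `m₁(G)`: number of vertices in twin-equivalence classes of type 1 (singletons). -/
noncomputable def m1 (G : SimpleGraph V) [Fintype V] : ℕ :=
  (univ.filter fun u => ∀ w, ¬G.Twins u w).card

open scoped Classical in
/-- `m₂(G)`: number of vertices in twin-equivalence classes of type 2 (cliques). -/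
noncomputable def m2 (G : SimpleGraph V) [Fintype V] : ℕ :=
  (univ.filter fun u => ∃ w, G.Twins u w ∧ G.Adj u w).card

open scoped Classical in
/-- `m₃(G)`: number of vertices in twin-equivalence classes of type 3 (independent sets). -/
noncomputable def m3 (G : SimpleGraph V) [Fintype V] : ℕ :=
  (univ.filter fun u => ∃ w, G.Twins u w ∧ ¬G.Adj u w).card

section Aux

variable {α β : Type*}

private lemma lex_walk_ge (G : SimpleGraph α) (H : SimpleGraph β) :
    ∀ {x y : α × β} (p : (G.lexProd H).Walk x y), G.edist x.1 y.1 ≤ p.length := by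
  intro x y p
  induction p with
  | nil => simp [SimpleGraph.edist_self]
  | @cons a b c h q ih =>
    rcases h with h | ⟨he, _⟩
    · calc G.edist a.1 c.1 ≤ G.edist a.1 b.1 + G.edist b.1 c.1 := SimpleGraph.edist_triangle
        _ ≤ 1 + q.length := by
            gcongr
            exact le_of_eq (SimpleGraph.edist_eq_one_iff_adj.mpr h)
        _ = ((SimpleGraph.Walk.cons (SimpleGraph.Adj.symm (Or.inl h.symm)) q).length : ℕ∞) := by
            rw [SimpleGraph.Walk.length_cons]; push_cast; ring
    · have h1 : G.edist a.1 c.1 = G.edist b.1 c.1 := by rw [he]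
      rw [h1]
      exact le_trans ih (Nat.cast_le.mpr (Nat.le_succ _))

private lemma lex_edist_of_ne (G : SimpleGraph α) (H : SimpleGraph β)
    {u1 u2 : α} (h : u1 ≠ u2) (v1 v2 : β) :
    (G.lexProd H).edist (u1, v1) (u2, v2) = G.edist u1 u2 := by
  refine le_antisymm ?_ ?_
  · rcases eq_or_ne (G.edist u1 u2) ⊤ with ht | ht
    · rw [ht]; exact le_top
    · obtain ⟨p, hp⟩ := SimpleGraph.exists_walk_of_edist_ne_top ht
      cases p with
      | nil => exact absurd rfl h
      | @cons _ x _ ha q =>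
        let f : G →g (G.lexProd H) := ⟨fun w => (w, v2), fun hadj => Or.inl hadj⟩
        refine le_trans (SimpleGraph.edist_le
          (SimpleGraph.Walk.cons (show (G.lexProd H).Adj (u1, v1) (x, v2) from Or.inl ha)
            (q.map f))) ?_
        rw [← hp]
        simp [SimpleGraph.Walk.length_cons, SimpleGraph.Walk.length_map]
  · rcases eq_or_ne ((G.lexProd H).edist (u1, v1) (u2, v2)) ⊤ with ht | ht
    · rw [ht]; exact le_top
    · obtain ⟨p, hp⟩ := SimpleGraph.exists_walk_of_edist_ne_top ht
      rw [← hp]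
      exact lex_walk_ge G H p

private lemma exists_adj_of_connected [Fintype α] (G : SimpleGraph α)
    (hG : G.Connected) (hca : 2 ≤ Fintype.card α) (u : α) : ∃ w, G.Adj u w := by
  obtain ⟨w, hw⟩ := Fintype.exists_ne_of_one_lt_card (by omega) u
  obtain ⟨p⟩ := hG u w
  cases p with
  | nil => exact absurd rfl hw.symm
  | cons ha _ => exact ⟨_, ha⟩

private lemma lex_edist_same [Fintype α] [DecidableEq β] (G : SimpleGraph α)
    (H : SimpleGraph β) [DecidableRel H.Adj] (hG : G.Connected) (hca : 2 ≤ Fintype.card α) (u : α) (v t : β) :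
    (G.lexProd H).edist (u, v) (u, t) = if v = t then 0 else if H.Adj v t then 1 else 2 := by
  split_ifs with h1 h2
  · subst h1; exact SimpleGraph.edist_self
  · exact SimpleGraph.edist_eq_one_iff_adj.mpr (Or.inr ⟨rfl, h2⟩)
  · obtain ⟨w, hw⟩ := exists_adj_of_connected G hG hca u
    refine le_antisymm ?_ ?_
    · refine le_trans (SimpleGraph.edist_le
        (SimpleGraph.Walk.cons (show (G.lexProd H).Adj (u, v) (w, v) from Or.inl hw)
          (SimpleGraph.Walk.cons (show (G.lexProd H).Adj (w, v) (u, t) from Or.inl hw.symm)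
            SimpleGraph.Walk.nil))) ?_
      simp
    · have h0 : (G.lexProd H).edist (u, v) (u, t) ≠ 0 := by
        intro he
        exact h1 (congrArg Prod.snd (SimpleGraph.edist_eq_zero_iff.mp he))
      have hne1 : (G.lexProd H).edist (u, v) (u, t) ≠ 1 := by
        intro he
        rcases SimpleGraph.edist_eq_one_iff_adj.mp he with hh | ⟨_, hh⟩
        · exact G.irrefl hh
        · exact h2 hh
      have hlt : 1 < (G.lexProd H).edist (u, v) (u, t) :=
        lt_of_le_of_ne (Order.one_le_iff_pos.mpr (pos_iff_ne_zero.mpr h0)) (Ne.symm hne1)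
      have := (ENat.add_one_le_iff (by simp : (1 : ℕ∞) ≠ ⊤)).mpr hlt
      calc (2 : ℕ∞) = 1 + 1 := by norm_num
        _ ≤ _ := this

private lemma mem_locatingFinset' [Fintype β] [DecidableEq β] (H : SimpleGraph β)
    [DecidableRel H.Adj] {v1 v2 t : β} :
    t ∈ locatingFinset H v1 v2 ↔
      t = v1 ∨ t = v2 ∨ (H.Adj v1 t ∧ ¬H.Adj v2 t) ∨ (H.Adj v2 t ∧ ¬H.Adj v1 t) := by
  simp [locatingFinset, Finset.mem_symmDiff, SimpleGraph.adj_comm, or_assoc]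

private lemma loc_weight_ge_one [Fintype β] [DecidableEq β] (H : SimpleGraph β)
    [DecidableRel H.Adj] (hcb : 2 ≤ Fintype.card β) {g : β → ℝ}
    (hg : IsLocatingFn H g) : 1 ≤ ∑ v, g v := by
  have : Nontrivial β := Fintype.one_lt_card_iff_nontrivial.mp (by omega)
  obtain ⟨b1, b2, hne⟩ := exists_pair_ne β
  calc (1 : ℝ) ≤ ∑ v ∈ locatingFinset H b1 b2, g v := hg.2 b1 b2 hne
    _ ≤ ∑ v, g v := Finset.sum_le_sum_of_subset_of_nonneg (Finset.subset_univ _)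
        (fun i _ _ => (hg.1 i).1)

private lemma set_ne_witness {s t : Set α} (h : s ≠ t) :
    ∃ w, (w ∈ s ∧ w ∉ t) ∨ (w ∈ t ∧ w ∉ s) := by
  by_contra hc
  push_neg at hc
  apply h
  ext x
  have := hc x
  tauto

private lemma resolver_of_closed (G : SimpleGraph α) {u1 u2 w : α} (hadj : G.Adj u1 u2)
    (h1 : w ∈ insert u1 (G.neighborSet u1)) (h2 : w ∉ insert u2 (G.neighborSet u2)) :
    w ≠ u1 ∧ w ≠ u2 ∧ G.edist u1 w ≠ G.edist u2 w := by
  have hwu2 : w ≠ u2 := fun he => h2 (he ▸ Set.mem_insert _ _)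
  have hwu1 : w ≠ u1 := by
    rintro rfl
    exact h2 (Set.mem_insert_iff.mpr (Or.inr hadj.symm))
  have ha1 : G.Adj u1 w := (Set.mem_insert_iff.mp h1).resolve_left hwu1
  have hna2 : ¬G.Adj u2 w := fun ha => h2 (Set.mem_insert_of_mem _ ha)
  refine ⟨hwu1, hwu2, ?_⟩
  rw [SimpleGraph.edist_eq_one_iff_adj.mpr ha1]
  exact fun he => hna2 (SimpleGraph.edist_eq_one_iff_adj.mp he.symm)

private lemma resolver_of_open (G : SimpleGraph α) {u1 u2 w : α} (hnadj : ¬G.Adj u1 u2)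
    (h1 : w ∈ G.neighborSet u1) (h2 : w ∉ G.neighborSet u2) :
    w ≠ u1 ∧ w ≠ u2 ∧ G.edist u1 w ≠ G.edist u2 w := by
  have ha1 : G.Adj u1 w := h1
  have hwu1 : w ≠ u1 := ha1.ne'
  have hwu2 : w ≠ u2 := by rintro rfl; exact hnadj ha1
  refine ⟨hwu1, hwu2, ?_⟩
  rw [SimpleGraph.edist_eq_one_iff_adj.mpr ha1]
  exact fun he => h2 (SimpleGraph.edist_eq_one_iff_adj.mp he.symm)

private lemma exists_resolver (G : SimpleGraph α) (htw : ∀ u1 u2 : α, ¬G.Twins u1 u2)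
    {u1 u2 : α} (h : u1 ≠ u2) :
    ∃ w, w ≠ u1 ∧ w ≠ u2 ∧ G.edist u1 w ≠ G.edist u2 w := by
  have hnt := htw u1 u2
  simp only [SimpleGraph.Twins, not_and, not_or] at hnt
  obtain ⟨hc, ho⟩ := hnt h
  by_cases hadj : G.Adj u1 u2
  · obtain ⟨w, hw | hw⟩ := set_ne_witness hc
    · exact ⟨w, resolver_of_closed G hadj hw.1 hw.2⟩
    · obtain ⟨h1, h2, h3⟩ := resolver_of_closed G hadj.symm hw.1 hw.2
      exact ⟨w, h2, h1, h3.symm⟩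
  · obtain ⟨w, hw | hw⟩ := set_ne_witness ho
    · exact ⟨w, resolver_of_open G hadj hw.1 hw.2⟩
    · obtain ⟨h1, h2, h3⟩ := resolver_of_open G (fun ha => hadj ha.symm) hw.1 hw.2
      exact ⟨w, h2, h1, h3.symm⟩

private lemma restrict_loc [Fintype α] [Fintype β] [DecidableEq β]
    (G : SimpleGraph α) (H : SimpleGraph β) [DecidableRel H.Adj]
    (hG : G.Connected) (hca : 2 ≤ Fintype.card α)
    {g : α × β → ℝ} (hg : IsResolvingFn (G.lexProd H) g) (u : α) :
    IsLocatingFn H (fun v => g (u, v)) := by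
  classical
  refine ⟨fun v => hg.1 _, fun v1 v2 hne => ?_⟩
  have key : resolvingFinset (G.lexProd H) (u, v1) (u, v2) ⊆
      (locatingFinset H v1 v2).image (fun v => (u, v)) := by
    intro z hz
    simp only [resolvingFinset, Finset.mem_filter, Finset.mem_univ, true_and] at hz
    obtain ⟨w, t⟩ := z
    by_cases hwu : w = u
    · subst hwu
      refine Finset.mem_image.mpr ⟨t, ?_, rfl⟩
      by_contra hts
      rw [mem_locatingFinset'] at hts
      push_neg at hts
      obtain ⟨ht1, ht2, ht3, ht4⟩ := hts
      rw [lex_edist_same G H hG hca w v1 t, lex_edist_same G H hG hca w v2 t] at hz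
      have hiff : H.Adj v1 t ↔ H.Adj v2 t := by tauto
      have hv1t : ¬v1 = t := fun he => ht1 he.symm
      have hv2t : ¬v2 = t := fun he => ht2 he.symm
      rw [if_neg hv1t, if_neg hv2t] at hz
      by_cases ha1 : H.Adj v1 t
      · rw [if_pos ha1, if_pos (hiff.mp ha1)] at hz; exact hz rfl
      · rw [if_neg ha1, if_neg (fun hh => ha1 (hiff.mpr hh))] at hz; exact hz rfl
    · exact absurd (by
        rw [lex_edist_of_ne G H (fun he => hwu he.symm) v1 t,
          lex_edist_of_ne G H (fun he => hwu he.symm) v2 t]) hz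
  calc (1 : ℝ) ≤ ∑ z ∈ resolvingFinset (G.lexProd H) (u, v1) (u, v2), g z :=
        hg.2 (u, v1) (u, v2) (fun he => hne (congrArg Prod.snd he))
    _ ≤ ∑ z ∈ (locatingFinset H v1 v2).image (fun v => (u, v)), g z :=
        Finset.sum_le_sum_of_subset_of_nonneg key (fun i _ _ => (hg.1 i).1)
    _ = ∑ v ∈ locatingFinset H v1 v2, g (u, v) :=
        Finset.sum_image (fun a _ b _ he => by exact congrArg Prod.snd he)

private lemma lift_res [Fintype α] [Fintype β] [DecidableEq β]
    (G : SimpleGraph α) (H : SimpleGraph β) [DecidableRel H.Adj]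
    (hG : G.Connected) (hca : 2 ≤ Fintype.card α) (hcb : 2 ≤ Fintype.card β)
    (htw : ∀ u1 u2 : α, ¬G.Twins u1 u2)
    {h : β → ℝ} (hh : IsLocatingFn H h) :
    IsResolvingFn (G.lexProd H) (fun p => h p.2) := by
  classical
  refine ⟨fun p => hh.1 _, ?_⟩
  rintro ⟨u1, v1⟩ ⟨u2, v2⟩ hne
  by_cases huu : u1 = u2
  · subst huu
    have hv : v1 ≠ v2 := fun he => hne (by rw [he])
    have key : (locatingFinset H v1 v2).image (fun v => (u1, v)) ⊆
        resolvingFinset (G.lexProd H) (u1, v1) (u1, v2) := by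
      intro z hz
      simp only [Finset.mem_image] at hz
      obtain ⟨t, ht, rfl⟩ := hz
      simp only [resolvingFinset, Finset.mem_filter, Finset.mem_univ, true_and]
      rw [lex_edist_same G H hG hca u1 v1 t, lex_edist_same G H hG hca u1 v2 t]
      rw [mem_locatingFinset'] at ht
      rcases ht with rfl | rfl | ⟨ha, hna⟩ | ⟨ha, hna⟩
      · rw [if_pos rfl, if_neg (Ne.symm hv)]
        split_ifs <;> decide
      · rw [if_pos rfl, if_neg hv]
        split_ifs <;> decide
      · rw [if_neg ha.ne, if_pos ha]
        by_cases hv2t : v2 = t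
        · rw [if_pos hv2t]; decide
        · rw [if_neg hv2t, if_neg hna]; decide
      · rw [if_neg ha.ne, if_pos ha]
        by_cases hv1t : v1 = t
        · rw [if_pos hv1t]; decide
        · rw [if_neg hv1t, if_neg hna]; decide
    calc (1 : ℝ) ≤ ∑ v ∈ locatingFinset H v1 v2, h v := hh.2 v1 v2 hv
      _ = ∑ z ∈ (locatingFinset H v1 v2).image (fun v => (u1, v)), h z.2 :=
          (Finset.sum_image (f := fun z : α × β => h z.2) (g := fun v : β => (u1, v))
            (fun a _ b _ he => by exact congrArg Prod.snd he)).symm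
      _ ≤ ∑ z ∈ resolvingFinset (G.lexProd H) (u1, v1) (u1, v2), h z.2 :=
          Finset.sum_le_sum_of_subset_of_nonneg key (fun i _ _ => (hh.1 i.2).1)
  · obtain ⟨w, hw1, hw2, hw3⟩ := exists_resolver G htw huu
    have key : (Finset.univ.image (fun t : β => (w, t))) ⊆
        resolvingFinset (G.lexProd H) (u1, v1) (u2, v2) := by
      intro z hz
      simp only [Finset.mem_image, Finset.mem_univ, true_and] at hz
      obtain ⟨t, rfl⟩ := hz
      simp only [resolvingFinset, Finset.mem_filter, Finset.mem_univ, true_and]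
      rw [lex_edist_of_ne G H (fun he => hw1 he.symm) v1 t,
        lex_edist_of_ne G H (fun he => hw2 he.symm) v2 t]
      exact hw3
    calc (1 : ℝ) ≤ ∑ v, h v := loc_weight_ge_one H hcb hh
      _ = ∑ z ∈ Finset.univ.image (fun t : β => (w, t)), h z.2 :=
          (Finset.sum_image (f := fun z : α × β => h z.2) (g := fun t : β => (w, t))
            (fun a _ b _ he => by exact congrArg Prod.snd he)).symm
      _ ≤ ∑ z ∈ resolvingFinset (G.lexProd H) (u1, v1) (u2, v2), h z.2 :=
          Finset.sum_le_sum_of_subset_of_nonneg key (fun i _ _ => (hh.1 i.2).1)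

end Aux

/-- If a connected graph `G` has no twins, then for any graph `H`,
`dim_f(G[H]) = |V(G)| · l_f(H)`. -/
theorem stmt_17 {α β : Type*} [Fintype α] [Fintype β] [DecidableEq β]
    (G : SimpleGraph α) (H : SimpleGraph β) [DecidableRel H.Adj]
    (hG : G.Connected) (hca : 2 ≤ Fintype.card α) (hcb : 2 ≤ Fintype.card β)
    (htw : ∀ u1 u2 : α, ¬G.Twins u1 u2) :
    fracMetricDim (G.lexProd H) = (Fintype.card α : ℝ) * fracLoc H := by
  classical
  set A : Set ℝ := {w | ∃ g, IsResolvingFn (G.lexProd H) g ∧ w = ∑ v, g v} with hA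
  set B : Set ℝ := {w | ∃ g, IsLocatingFn H g ∧ w = ∑ v, g v} with hB
  have hdim : fracMetricDim (G.lexProd H) = sInf A := rfl
  have hloc : fracLoc H = sInf B := rfl
  have hone : IsLocatingFn H (fun _ => (1 : ℝ)) := by
    refine ⟨fun v => ⟨zero_le_one, le_refl 1⟩, fun v1 v2 hne => ?_⟩
    have hmem : v1 ∈ locatingFinset H v1 v2 := (mem_locatingFinset' H).mpr (Or.inl rfl)
    calc (1 : ℝ) ≤ ((locatingFinset H v1 v2).card : ℝ) := by
          exact_mod_cast Finset.card_pos.mpr ⟨v1, hmem⟩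
      _ = ∑ _v ∈ locatingFinset H v1 v2, (1 : ℝ) := by simp
  have hBne : B.Nonempty := ⟨_, fun _ => (1 : ℝ), hone, rfl⟩
  have hAne : A.Nonempty := ⟨_, _, lift_res G H hG hca hcb htw hone, rfl⟩
  have hBbdd : BddBelow B := by
    refine ⟨0, ?_⟩
    rintro b ⟨g, hg, rfl⟩
    exact Finset.sum_nonneg fun i _ => (hg.1 i).1
  have hAbdd : BddBelow A := by
    refine ⟨0, ?_⟩
    rintro a ⟨g, hg, rfl⟩
    exact Finset.sum_nonneg fun i _ => (hg.1 i).1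
  have hnpos : (0 : ℝ) < (Fintype.card α : ℝ) := by
    have : (2 : ℝ) ≤ (Fintype.card α : ℝ) := by exact_mod_cast hca
    linarith
  have h1 : ∀ a ∈ A, (Fintype.card α : ℝ) * sInf B ≤ a := by
    rintro a ⟨g, hg, rfl⟩
    have hres : ∀ u : α, sInf B ≤ ∑ v, g (u, v) := fun u =>
      csInf_le hBbdd ⟨fun v => g (u, v), restrict_loc G H hG hca hg u, rfl⟩
    calc (Fintype.card α : ℝ) * sInf B = ∑ _u : α, sInf B := by
          rw [Finset.sum_const, Finset.card_univ, nsmul_eq_mul]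
      _ ≤ ∑ u : α, ∑ v, g (u, v) := Finset.sum_le_sum fun u _ => hres u
      _ = ∑ p, g p := by rw [Fintype.sum_prod_type]
  have h2 : ∀ b ∈ B, sInf A ≤ (Fintype.card α : ℝ) * b := by
    rintro b ⟨g, hg, rfl⟩
    refine csInf_le hAbdd ⟨fun p => g p.2, lift_res G H hG hca hcb htw hg, ?_⟩
    rw [Fintype.sum_prod_type]
    simp [Finset.sum_const, Finset.card_univ, nsmul_eq_mul]
  rw [hdim, hloc]
  refine le_antisymm ?_ (le_csInf hAne h1)
  have hstep : ∀ b ∈ B, sInf A / (Fintype.card α : ℝ) ≤ b := fun b hb => by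
    rw [div_le_iff₀ hnpos]
    calc sInf A ≤ (Fintype.card α : ℝ) * b := h2 b hb
      _ = b * (Fintype.card α : ℝ) := mul_comm _ _
  have hfin : sInf A / (Fintype.card α : ℝ) ≤ sInf B := le_csInf hBne hstep
  calc sInf A = sInf A / (Fintype.card α : ℝ) * (Fintype.card α : ℝ) := by
        field_simp
    _ ≤ sInf B * (Fintype.card α : ℝ) :=
        mul_le_mul_of_nonneg_right hfin (le_of_lt hnpos)
    _ = (Fintype.card α : ℝ) * sInf B := mul_comm _ _
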